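/- Let A be a unital C*-algebra, q ∈ (-1,1), u, v > 0 real numbers, and a, c ∈ A satisfying: (i) (star a)·a = u²·1 + q·(a·(star a)); (ii) (star a)·c = q·(c·(star a)); (iii) ‖a^p‖ ≤ C_q·(1-q)^{-p/2}·u^p and ‖c^p‖ ≤ C_q·(1-q)^{-p/2}·v^p for all integers p ≥ 1. Then for all integers m > n ≥ 1 and ℓ ≥ 1 there exists Y ∈ A such that (star a)^m · a^n · c^ℓ = q^ℓ·Y and ‖Y‖ ≤ (C_q^3 + C_q^7/(1-|q|))·(1-q)^{-(m+n+ℓ)/2}·u^{m+n}·v^ℓ. -/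

import Mathlib

/-- The constant `C_q = ∏_{j=1}^∞ (1-|q|^j)^{-1}`. -/
noncomputable def Cq (q : ℝ) : ℝ := ∏' j : ℕ, (1 - |q| ^ (j + 1))⁻¹


noncomputable def Rr (x : ℝ) : ℕ → ℕ → ℕ → ℝ
  | 0, _, k => if k = 0 then 1 else 0
  | _+1, 0, k => if k = 0 then 1 else 0
  | m+1, n+1, 0 => x ^ (n+1) * Rr x m (n+1) 0
  | m+1, n+1, k+1 => Rr x m n k + x ^ (n+1) * Rr x m (n+1) (k+1)

noncomputable def Bb (t : ℝ) : ℕ → ℕ → ℝ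
  | 0, 0 => 1
  | 0, _+1 => 0
  | _+1, 0 => 1
  | m+1, k+1 => Bb t m k + t^(k+1) * Bb t m (k+1)

lemma Rr_vanish_n (x : ℝ) : ∀ m n k, n < k → Rr x m n k = 0 := by
  intro m
  induction m with
  | zero => intro n k h; have : k ≠ 0 := by omega
            simp [Rr, this]
  | succ m ih =>
    intro n k h
    match n, k with
    | 0, k => have : k ≠ 0 := by omega
              simp [Rr, this]
    | n+1, k+1 =>
      rw [Rr, ih n k (by omega), ih (n+1) (k+1) (by omega)]
      ring

lemma Rr_vanish (x : ℝ) : ∀ m n k, m < k → Rr x m n k = 0 := by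
  intro m
  induction m with
  | zero => intro n k h
            have : k ≠ 0 := by omega
            simp [Rr, this]
  | succ m ih =>
    intro n k h
    match n, k with
    | 0, k => have : k ≠ 0 := by omega
              simp [Rr, this]
    | n+1, 0 => omega
    | n+1, k+1 =>
      rw [Rr, ih n k (by omega), ih (n+1) (k+1) (by omega)]
      ring

lemma Rr_nonneg (t : ℝ) (ht : 0 ≤ t) : ∀ m n k, 0 ≤ Rr t m n k := by
  intro m
  induction m with
  | zero => intro n k; rw [Rr]; positivity
  | succ m ih =>
    intro n k
    match n, k with
    | 0, k => rw [Rr]; positivity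
    | n+1, 0 => rw [Rr]; exact mul_nonneg (pow_nonneg ht _) (ih (n+1) 0)
    | n+1, k+1 => rw [Rr]
                  exact add_nonneg (ih n k) (mul_nonneg (pow_nonneg ht _) (ih (n+1) (k+1)))

lemma abs_Rr_le (q : ℝ) : ∀ m n k, |Rr q m n k| ≤ Rr |q| m n k := by
  intro m
  induction m with
  | zero => intro n k; rw [Rr, Rr]; split <;> simp
  | succ m ih =>
    intro n k
    match n, k with
    | 0, k => rw [Rr, Rr]; split <;> simp
    | n+1, 0 =>
      rw [Rr, Rr, abs_mul, abs_pow]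
      exact mul_le_mul_of_nonneg_left (ih (n+1) 0) (by positivity)
    | n+1, k+1 =>
      rw [Rr, Rr]
      refine (abs_add_le _ _).trans (add_le_add (ih n k) ?_)
      rw [abs_mul, abs_pow]
      exact mul_le_mul_of_nonneg_left (ih (n+1) (k+1)) (by positivity)

lemma Bb_nonneg (t : ℝ) (ht : 0 ≤ t) : ∀ m k, 0 ≤ Bb t m k := by
  intro m
  induction m with
  | zero => intro k; match k with
            | 0 => rw [Bb]; norm_num
            | k+1 => rw [Bb]
  | succ m ih =>
    intro k
    match k with
    | 0 => rw [Bb]; norm_num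
    | k+1 => rw [Bb]
             exact add_nonneg (ih k) (mul_nonneg (pow_nonneg ht _) (ih (k+1)))

lemma Bb_le (t : ℝ) (ht0 : 0 ≤ t) (ht1 : t < 1) :
    ∀ m k, Bb t m k ≤ ∏ i ∈ Finset.range k, (1 - t^(i+1))⁻¹ := by
  have hfac : ∀ i : ℕ, 0 < 1 - t^(i+1) := by
    intro i
    have : t ^ (i+1) ≤ t ^ 1 := pow_le_pow_of_le_one ht0 ht1.le (by omega)
    simp only [pow_one] at this
    linarith
  have hP0 : ∀ k, 0 ≤ ∏ i ∈ Finset.range k, (1 - t^(i+1))⁻¹ := by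
    intro k
    exact Finset.prod_nonneg fun i _ => inv_nonneg.2 (hfac i).le
  intro m
  induction m with
  | zero => intro k; match k with
            | 0 => rw [Bb]; simp
            | k+1 => rw [Bb]; exact hP0 (k+1)
  | succ m ih =>
    intro k
    match k with
    | 0 => rw [Bb]; simp
    | k+1 =>
      rw [Bb]
      have key : (∏ i ∈ Finset.range k, (1 - t^(i+1))⁻¹) + t^(k+1) * ∏ i ∈ Finset.range (k+1), (1 - t^(i+1))⁻¹
          = ∏ i ∈ Finset.range (k+1), (1 - t^(i+1))⁻¹ := by
        rw [Finset.prod_range_succ]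
        have h := hfac k
        have hPpos : 0 < ∏ i ∈ Finset.range k, (1 - t^(i+1)) :=
          Finset.prod_pos fun i _ => hfac i
        have hx : (1:ℝ) + t^(k+1) * (1 - t^(k+1))⁻¹ = (1 - t^(k+1))⁻¹ := by
          field_simp
          ring
        linear_combination (∏ x ∈ Finset.range k, (1 - t ^ (x + 1))⁻¹) * hx
      calc Bb t m k + t^(k+1) * Bb t m (k+1)
          ≤ (∏ i ∈ Finset.range k, (1 - t^(i+1))⁻¹) + t^(k+1) * ∏ i ∈ Finset.range (k+1), (1 - t^(i+1))⁻¹ :=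
            add_le_add (ih k) (mul_le_mul_of_nonneg_left (ih (k+1)) (by positivity))
        _ = _ := key

lemma Bb_zero (t : ℝ) : ∀ m, Bb t m 0 = 1 := by
  intro m; match m with
  | 0 => rw [Bb]
  | m+1 => rw [Bb]

lemma Rr_le_pow_mul_Bb (t : ℝ) (ht0 : 0 ≤ t) (ht1 : t < 1) :
    ∀ m n k, Rr t m n k ≤ t ^ ((m-k)*(n-k)) * Bb t m k := by
  intro m
  induction m with
  | zero =>
    intro n k
    match k with
    | 0 => rw [Rr, Bb]; simp
    | k+1 => rw [Rr]
             simp only [if_neg (Nat.succ_ne_zero k)]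
             have := Bb_nonneg t ht0 0 (k+1)
             positivity
  | succ m ih =>
    intro n k
    match n, k with
    | 0, 0 => rw [Rr, Bb_zero]; simp
    | 0, k+1 => rw [Rr]
                simp only [if_neg (Nat.succ_ne_zero k)]
                have := Bb_nonneg t ht0 (m+1) (k+1)
                positivity
    | n+1, 0 =>
      rw [Rr, Bb_zero, Nat.sub_zero, Nat.sub_zero]
      calc t ^ (n+1) * Rr t m (n+1) 0
          ≤ t ^ (n+1) * (t ^ ((m-0)*(n+1-0)) * Bb t m 0) :=
            mul_le_mul_of_nonneg_left (ih (n+1) 0) (by positivity)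
        _ = t ^ ((m+1)*(n+1)) * 1 := by
            rw [Bb_zero, Nat.sub_zero, Nat.sub_zero, mul_one, mul_one, ← pow_add]
            congr 1
            ring
    | n+1, k+1 =>
      rw [Rr, Bb, Nat.succ_sub_succ, Nat.succ_sub_succ]
      rcases le_or_gt (k+1) (n+1) with hk | hk
      · have hb1 : Rr t m n k ≤ t ^ ((m-k)*(n-k)) * Bb t m k := ih n k
        have hb2 : t^(n+1) * Rr t m (n+1) (k+1)
            ≤ t ^ ((m-k)*(n-k)) * (t^(k+1) * Bb t m (k+1)) := by
          calc t^(n+1) * Rr t m (n+1) (k+1)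
              ≤ t^(n+1) * (t ^ ((m-(k+1))*(n-k)) * Bb t m (k+1)) := by
                have := ih (n+1) (k+1)
                rw [Nat.succ_sub_succ] at this
                exact mul_le_mul_of_nonneg_left this (by positivity)
            _ = t ^ ((n+1) + (m-(k+1))*(n-k)) * Bb t m (k+1) := by
                rw [← mul_assoc, ← pow_add]
            _ ≤ t ^ ((m-k)*(n-k) + (k+1)) * Bb t m (k+1) := by
                refine mul_le_mul_of_nonneg_right ?_ (Bb_nonneg t ht0 m (k+1))
                refine pow_le_pow_of_le_one ht0 ht1.le ?_
                obtain ⟨d, hd⟩ : ∃ d, m - k = d + 1 ∨ m ≤ k := by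
                  rcases le_or_gt m k with h | h
                  · exact ⟨0, Or.inr h⟩
                  · exact ⟨m - k - 1, Or.inl (by omega)⟩
                rcases hd with hd | hd
                · have hd2 : m - (k+1) = d := by omega
                  rw [hd, hd2, add_mul, one_mul]
                  have hnk : n - k ≤ n + 1 := by omega
                  omega
                · have h1 : m - k = 0 := by omega
                  have h2 : m - (k+1) = 0 := by omega
                  rw [h1, h2, zero_mul]
                  omega
            _ = t ^ ((m-k)*(n-k)) * (t^(k+1) * Bb t m (k+1)) := by
                rw [pow_add]; ring
        calc Rr t m n k + t^(n+1) * Rr t m (n+1) (k+1)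
            ≤ t ^ ((m-k)*(n-k)) * Bb t m k + t ^ ((m-k)*(n-k)) * (t^(k+1) * Bb t m (k+1)) :=
              add_le_add hb1 hb2
          _ = t ^ ((m-k)*(n-k)) * (Bb t m k + t^(k+1) * Bb t m (k+1)) := by ring
      · rw [Rr_vanish_n t m n k (by omega), Rr_vanish_n t m (n+1) (k+1) (by omega)]
        have : 0 ≤ t ^ ((m - k) * (n - k)) * (Bb t m k + t ^ (k + 1) * Bb t m (k + 1)) := by
          have := Bb_nonneg t ht0 m k
          have := Bb_nonneg t ht0 m (k+1)
          positivity
        linarith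

noncomputable def Acoef (q : ℝ) (n k : ℕ) : ℝ := ∏ i ∈ Finset.range k, (1 - q ^ (n - i))

noncomputable def wcoef (q u : ℝ) (m n k : ℕ) : ℝ := (u^2 / (1-q))^k * Acoef q n k * Rr q m n k

lemma Acoef_succ (q : ℝ) (n k : ℕ) : Acoef q (n+1) (k+1) = (1 - q^(n+1)) * Acoef q n k := by
  rw [Acoef, Acoef, Finset.prod_range_succ']
  simp only [Nat.succ_sub_succ, Nat.sub_zero]
  ring

lemma wcoef_zero (q u : ℝ) (m n : ℕ) :
    wcoef q u (m+1) (n+1) 0 = q^(n+1) * wcoef q u m (n+1) 0 := by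
  rw [wcoef, wcoef, Rr]
  ring

lemma wcoef_succ (q u : ℝ) (hq : q ≠ 1) (m n k : ℕ) :
    wcoef q u (m+1) (n+1) (k+1)
      = u^2 * (∑ i ∈ Finset.range (n+1), q^i) * wcoef q u m n k
        + q^(n+1) * wcoef q u m (n+1) (k+1) := by
  have hgs : (1:ℝ) - q^(n+1) = (∑ i ∈ Finset.range (n+1), q^i) * (1-q) := by
    linear_combination geom_sum_mul q (n+1)
  have hq' : (1:ℝ) - q ≠ 0 := by
    intro h; apply hq; linarith [h]
  rw [wcoef, wcoef, wcoef, Rr, Acoef_succ]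
  rw [hgs]
  have hd : u^2/(1-q)*(1-q) = u^2 := div_mul_cancel₀ _ hq'
  linear_combination ((u^2/(1-q))^k * (∑ i ∈ Finset.range (n+1), q^i) * Acoef q n k * Rr q m n k) * hd

lemma abs_one_sub_pow_le {q : ℝ} (ht1 : |q| < 1) (e : ℕ) (he : 1 ≤ e) :
    |1 - q^e| ≤ (1 - |q|^e)⁻¹ := by
  have ht0 : (0:ℝ) ≤ |q| := abs_nonneg q
  have hfe : 0 < 1 - |q|^e := by
    have : |q| ^ e ≤ |q| ^ 1 := pow_le_pow_of_le_one ht0 ht1.le he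
    simp only [pow_one] at this
    linarith
  have h1 : |1 - q^e| ≤ 1 + |q|^e := by
    rw [sub_eq_add_neg]
    refine (abs_add_le _ _).trans ?_
    rw [abs_neg, abs_one, abs_pow]
  have h2 : 1 + |q|^e ≤ (1 - |q|^e)⁻¹ := by
    rw [inv_eq_one_div, le_div_iff₀ hfe]
    nlinarith [pow_nonneg ht0 e, sq_nonneg (|q|^e)]
  linarith

lemma hfac_aux {t : ℝ} (ht0 : 0 ≤ t) (ht1 : t < 1) (i : ℕ) : 0 < 1 - t^(i+1) := by
  have : t ^ (i+1) ≤ t ^ 1 := pow_le_pow_of_le_one ht0 ht1.le (by omega)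
  simp only [pow_one] at this
  linarith

lemma multipliable_aux {t : ℝ} (ht0 : 0 ≤ t) (ht1 : t < 1) :
    Multipliable (fun j : ℕ => (1 - t ^ (j+1))⁻¹) := by
  have hfac := hfac_aux ht0 ht1
  have ht' : 0 < 1 - t := by linarith
  have hgeo : Summable (fun n : ℕ => t^(n+1) * (1-t)⁻¹) := by
    have h := (summable_geometric_of_lt_one ht0 ht1).mul_left (t * (1-t)⁻¹)
    exact h.congr (fun n => by rw [pow_succ']; ring)
  have hlog : Summable (fun n : ℕ => Real.log ((1 - t^(n+1))⁻¹)) := by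
    refine Summable.of_nonneg_of_le (fun n => Real.log_nonneg ?_) (fun n => ?_) hgeo
    · have h1 : 1 - t^(n+1) ≤ 1 := by nlinarith [pow_nonneg ht0 (n+1)]
      exact (one_le_inv₀ (hfac n)).2 h1
    · have h2 := Real.log_le_sub_one_of_pos (inv_pos.2 (hfac n))
      have e1 : (1 - t^(n+1))⁻¹ - 1 = t^(n+1) * (1 - t^(n+1))⁻¹ := by
        have hx := mul_inv_cancel₀ (hfac n).ne'
        linear_combination hx
      have e2 : (1 - t^(n+1))⁻¹ ≤ (1-t)⁻¹ := by
        apply inv_anti₀ ht'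
        nlinarith [pow_le_pow_of_le_one ht0 ht1.le (show 1 ≤ n+1 by omega)]
      have e3 : t^(n+1) * (1 - t^(n+1))⁻¹ ≤ t^(n+1) * (1-t)⁻¹ :=
        mul_le_mul_of_nonneg_left e2 (by positivity)
      linarith
  exact Real.multipliable_of_summable_log (fun n => inv_pos.2 (hfac n)) hlog

lemma one_le_fac_inv {t : ℝ} (ht0 : 0 ≤ t) (ht1 : t < 1) (i : ℕ) :
    1 ≤ (1 - t^(i+1))⁻¹ := by
  have h1 : 1 - t^(i+1) ≤ 1 := by nlinarith [pow_nonneg ht0 (i+1)]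
  exact one_le_inv₀ (hfac_aux ht0 ht1 i) |>.2 h1

lemma prod_le_Cq_aux {t : ℝ} (ht0 : 0 ≤ t) (ht1 : t < 1) (s : Finset ℕ) :
    ∏ j ∈ s, (1 - t^(j+1))⁻¹ ≤ ∏' j : ℕ, (1 - t^(j+1))⁻¹ := by
  have hm := multipliable_aux ht0 ht1
  refine ge_of_tendsto hm.hasProd ?_
  rw [SummationFilter.unconditional_filter, Filter.eventually_atTop]
  refine ⟨s, fun u hsu => ?_⟩
  rw [← Finset.prod_sdiff hsu]
  have h1 : (1:ℝ) ≤ ∏ j ∈ u \ s, (1 - t^(j+1))⁻¹ := by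
    calc (1:ℝ) = ∏ _j ∈ u \ s, (1:ℝ) := by simp
      _ ≤ _ := Finset.prod_le_prod (by intros; norm_num)
          (fun i _ => one_le_fac_inv ht0 ht1 i)
  have h2 : (0:ℝ) ≤ ∏ j ∈ s, (1 - t^(j+1))⁻¹ :=
    Finset.prod_nonneg fun i _ => inv_nonneg.2 (hfac_aux ht0 ht1 i).le
  nlinarith

/-- Abstract form of Corollary 3.3 of the paper. -/
theorem stmt2 (A : Type*) [NormedRing A] [StarRing A] [CStarRing A]
    [NormedAlgebra ℝ A] [CompleteSpace A]
    (q : ℝ) (hq : q ∈ Set.Ioo (-1 : ℝ) 1) (u v : ℝ) (hu : 0 < u) (hv : 0 < v)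
    (a c : A)
    (h1 : star a * a = (u ^ 2) • (1 : A) + q • (a * star a))
    (h2 : star a * c = q • (c * star a))
    (ha : ∀ p : ℕ, 1 ≤ p → ‖a ^ p‖ ≤ Cq q * (1 - q) ^ (-(p : ℝ) / 2) * u ^ p)
    (hc : ∀ p : ℕ, 1 ≤ p → ‖c ^ p‖ ≤ Cq q * (1 - q) ^ (-(p : ℝ) / 2) * v ^ p) :
    ∀ m n ℓ : ℕ, 1 ≤ n → n < m → 1 ≤ ℓ →
      ∃ Y : A,
        (star a) ^ m * a ^ n * c ^ ℓ = (q ^ ℓ) • Y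
        ∧ ‖Y‖ ≤ (Cq q ^ 3 + Cq q ^ 7 / (1 - |q|))
            * (1 - q) ^ (-((m : ℝ) + n + ℓ) / 2) * u ^ (m + n) * v ^ ℓ := by
  obtain ⟨hq1, hq2⟩ := hq
  have ht0 : (0:ℝ) ≤ |q| := abs_nonneg q
  have ht1 : |q| < 1 := abs_lt.2 ⟨hq1, hq2⟩
  have hD : (0:ℝ) < 1 - q := by linarith
  have hD1 : (0:ℝ) < 1 - |q| := by linarith
  have hprodle : ∀ s : Finset ℕ, (∏ j ∈ s, (1 - |q|^(j+1))⁻¹) ≤ Cq q :=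
    fun s => prod_le_Cq_aux ht0 ht1 s
  have hC1 : 1 ≤ Cq q := by simpa using hprodle ∅
  have hC0 : 0 ≤ Cq q := by linarith
  -- norm of 1
  have hone : ‖(1:A)‖ ≤ 1 := by
    rcases subsingleton_or_nontrivial A with hS | hN
    · simp [Subsingleton.elim (1:A) 0]
    · exact le_of_eq CStarRing.norm_one
  have hna : ∀ j : ℕ, ‖a ^ j‖ ≤ Cq q * (1 - q) ^ (-(j:ℝ)/2) * u ^ j := by
    intro j
    match j with
    | 0 =>
      simp only [pow_zero, Nat.cast_zero, neg_zero, zero_div, Real.rpow_zero, mul_one]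
      exact hone.trans hC1
    | j+1 => exact ha (j+1) (by omega)
  -- q-commutation lemmas
  have hA : ∀ p : ℕ, star a * a^(p+1)
      = (u^2 * ∑ i ∈ Finset.range (p+1), q^i) • a^p + q^(p+1) • (a^(p+1) * star a) := by
    intro p
    induction p with
    | zero => simpa using h1
    | succ p ih =>
      calc star a * a^(p+1+1) = (star a * a) * a^(p+1) := by
            rw [pow_succ' a (p+1), ← mul_assoc]
        _ = (u^2 • (1:A) + q • (a * star a)) * a^(p+1) := by rw [h1]
        _ = u^2 • a^(p+1) + q • (a * (star a * a^(p+1))) := by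
            rw [add_mul, smul_mul_assoc, smul_mul_assoc, one_mul, mul_assoc]
        _ = u^2 • a^(p+1) + q • (a * ((u^2 * ∑ i ∈ Finset.range (p+1), q^i) • a^p
              + q^(p+1) • (a^(p+1) * star a))) := by rw [ih]
        _ = u^2 • a^(p+1) + ((q * (u^2 * ∑ i ∈ Finset.range (p+1), q^i)) • (a * a^p)
              + (q * q^(p+1)) • (a * (a^(p+1) * star a))) := by
            rw [mul_add, mul_smul_comm, mul_smul_comm, smul_add, smul_smul, smul_smul]
        _ = (u^2 * ∑ i ∈ Finset.range (p+1+1), q^i) • a^(p+1)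
              + q^(p+1+1) • (a^(p+1+1) * star a) := by
            rw [← pow_succ' a p,
              show a * (a^(p+1) * star a) = a^(p+1+1) * star a by
                rw [← mul_assoc, ← pow_succ'],
              ← add_assoc, ← add_smul]
            congr 1
            · congr 1
              conv_rhs => rw [geom_sum_succ]
              ring
            · congr 1
              rw [← pow_succ']
  have hc1 : ∀ L : ℕ, star a * c^L = q^L • (c^L * star a) := by
    intro L
    induction L with
    | zero => simp
    | succ L ih =>
      calc star a * c^(L+1) = (star a * c) * c^L := by rw [pow_succ' c L, ← mul_assoc]
        _ = q • (c * (star a * c^L)) := by rw [h2, smul_mul_assoc, mul_assoc]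
        _ = q • (c * (q^L • (c^L * star a))) := by rw [ih]
        _ = (q * q^L) • (c * (c^L * star a)) := by rw [mul_smul_comm, smul_smul]
        _ = q^(L+1) • (c^(L+1) * star a) := by
            rw [← pow_succ' q L, ← mul_assoc, ← pow_succ' c L]
  have hc2 : ∀ p L : ℕ, (star a)^p * c^L = q^(p*L) • (c^L * (star a)^p) := by
    intro p L
    induction p with
    | zero => simp
    | succ p ih =>
      calc (star a)^(p+1) * c^L = (star a)^p * (star a * c^L) := by
            rw [pow_succ, mul_assoc]
        _ = (star a)^p * (q^L • (c^L * star a)) := by rw [hc1 L]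
        _ = q^L • (((star a)^p * c^L) * star a) := by rw [mul_smul_comm, ← mul_assoc]
        _ = q^L • ((q^(p*L) • (c^L * (star a)^p)) * star a) := by rw [ih]
        _ = (q^L * q^(p*L)) • (c^L * ((star a)^p * star a)) := by
            rw [smul_mul_assoc, smul_smul, mul_assoc]
        _ = q^((p+1)*L) • (c^L * (star a)^(p+1)) := by
            rw [← pow_succ, ← pow_add]
            congr 2
            ring
  -- the q-Wick expansion
  have hW : ∀ m n : ℕ, (star a)^m * a^n
      = ∑ k ∈ Finset.range (n+1), wcoef q u m n k • (a^(n-k) * (star a)^(m-k)) := by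
    intro m
    induction m with
    | zero =>
      intro n
      rw [pow_zero, one_mul]
      have hs : ∑ k ∈ Finset.range (n+1), wcoef q u 0 n k • (a^(n-k) * (star a)^(0-k))
          = wcoef q u 0 n 0 • (a^(n-0) * (star a)^(0-0)) := by
        refine Finset.sum_eq_single_of_mem 0 (Finset.mem_range.2 (by omega)) ?_
        intro k _ hk0
        obtain ⟨j, rfl⟩ := Nat.exists_eq_succ_of_ne_zero hk0
        rw [wcoef, Rr]
        simp
      rw [hs, wcoef, Rr]
      simp [Acoef]
    | succ m ihm =>
      intro n
      cases n with
      | zero =>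
        rw [Finset.sum_range_one, wcoef, Rr]
        simp [Acoef]
      | succ n =>
        calc (star a)^(m+1) * a^(n+1)
            = (star a)^m * (star a * a^(n+1)) := by rw [pow_succ, mul_assoc]
          _ = (star a)^m * ((u^2 * ∑ i ∈ Finset.range (n+1), q^i) • a^n
                + q^(n+1) • (a^(n+1) * star a)) := by rw [hA n]
          _ = (u^2 * ∑ i ∈ Finset.range (n+1), q^i) • ((star a)^m * a^n)
                + q^(n+1) • (((star a)^m * a^(n+1)) * star a) := by
              rw [mul_add, mul_smul_comm, mul_smul_comm, ← mul_assoc]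
          _ = (u^2 * ∑ i ∈ Finset.range (n+1), q^i) •
                (∑ k ∈ Finset.range (n+1), wcoef q u m n k • (a^(n-k) * (star a)^(m-k)))
                + q^(n+1) • ((∑ k ∈ Finset.range (n+2),
                    wcoef q u m (n+1) k • (a^(n+1-k) * (star a)^(m-k))) * star a) := by
              rw [ihm n, ihm (n+1)]
          _ = (∑ k ∈ Finset.range (n+1),
                ((u^2 * ∑ i ∈ Finset.range (n+1), q^i) * wcoef q u m n k)
                  • (a^(n-k) * (star a)^(m-k)))
                + ∑ k ∈ Finset.range (n+2),
                  (q^(n+1) * wcoef q u m (n+1) k) • (a^(n+1-k) * (star a)^(m+1-k)) := by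
              rw [Finset.smul_sum, Finset.sum_mul, Finset.smul_sum]
              congr 1
              · exact Finset.sum_congr rfl fun k _ => by rw [smul_smul]
              · refine Finset.sum_congr rfl fun k _ => ?_
                rw [smul_mul_assoc, smul_smul]
                rcases le_or_gt k m with h | h
                · congr 1
                  rw [mul_assoc, ← pow_succ]
                  congr 2
                  omega
                · have hz : wcoef q u m (n+1) k = 0 := by
                    rw [wcoef, Rr_vanish q m (n+1) k h, mul_zero]
                  rw [hz]
                  simp
          _ = ∑ k ∈ Finset.range (n+2), wcoef q u (m+1) (n+1) k
                • (a^(n+1-k) * (star a)^(m+1-k)) := by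
              rw [Finset.sum_range_succ' (fun k =>
                (q^(n+1) * wcoef q u m (n+1) k) • (a^(n+1-k) * (star a)^(m+1-k))) (n+1)]
              rw [Finset.sum_range_succ' (fun k =>
                wcoef q u (m+1) (n+1) k • (a^(n+1-k) * (star a)^(m+1-k))) (n+1)]
              rw [← add_assoc]
              congr 1
              · rw [← Finset.sum_add_distrib]
                refine Finset.sum_congr rfl fun k _ => ?_
                have h1' : n + 1 - (k+1) = n - k := by omega
                have h2' : m + 1 - (k+1) = m - k := by omega
                rw [h1', h2', wcoef_succ q u (ne_of_lt hq2) m n k, add_smul]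
              · rw [wcoef_zero]
  -- now the statement
  intro m n ℓ hn hnm hℓ
  have hstep1 : (star a)^m * a^n * c^ℓ
      = ∑ k ∈ Finset.range (n+1),
          (wcoef q u m n k * q^((m-k)*ℓ)) • (a^(n-k) * (c^ℓ * (star a)^(m-k))) := by
    rw [hW m n, Finset.sum_mul]
    refine Finset.sum_congr rfl fun k _ => ?_
    rw [smul_mul_assoc, mul_assoc, hc2 (m-k) ℓ, mul_smul_comm, smul_smul]
  refine ⟨∑ k ∈ Finset.range (n+1),
      (wcoef q u m n k * q^((m-k-1)*ℓ)) • (a^(n-k) * (c^ℓ * (star a)^(m-k))), ?_, ?_⟩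
  · rw [hstep1, Finset.smul_sum]
    refine Finset.sum_congr rfl fun k hk => ?_
    have hkn : k ≤ n := Nat.lt_succ_iff.mp (Finset.mem_range.mp hk)
    have hkm : k < m := lt_of_le_of_lt hkn hnm
    rw [smul_smul]
    congr 1
    obtain ⟨d, hd1, hd2⟩ : ∃ d, m - k = d + 1 ∧ m - k - 1 = d :=
      ⟨m - k - 1, by omega, rfl⟩
    rw [hd2, hd1, add_mul, one_mul, pow_add]
    ring
  · have hgeo2 : ∑ k ∈ Finset.range (n+1), |q|^(n-k) ≤ (1-|q|)⁻¹ := by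
      have href := Finset.sum_range_reflect (fun j => |q|^j) (n+1)
      calc ∑ k ∈ Finset.range (n+1), |q|^(n-k)
          = ∑ j ∈ Finset.range (n+1), |q|^j := by
            rw [← href]
            exact Finset.sum_congr rfl fun k _ => by norm_num
        _ ≤ ∑' j : ℕ, |q|^j := Summable.sum_le_tsum _ (fun i _ => pow_nonneg ht0 i)
              (summable_geometric_of_lt_one ht0 ht1)
        _ = (1-|q|)⁻¹ := tsum_geometric_of_lt_one ht0 ht1
    have hREST : (0:ℝ) ≤ (1-q) ^ (-((m:ℝ)+n+ℓ)/2) * u^(m+n) * v^ℓ :=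
      mul_nonneg (mul_nonneg (Real.rpow_nonneg hD.le _) (pow_nonneg hu.le _))
        (pow_nonneg hv.le _)
    have hK0 : (0:ℝ) ≤ Cq q^5 * ((1-q) ^ (-((m:ℝ)+n+ℓ)/2) * u^(m+n) * v^ℓ) :=
      mul_nonneg (pow_nonneg hC0 5) hREST
    have hterm : ∀ k ∈ Finset.range (n+1),
        ‖(wcoef q u m n k * q^((m-k-1)*ℓ)) • (a^(n-k) * (c^ℓ * (star a)^(m-k)))‖
          ≤ (Cq q^5 * ((1 - q) ^ (-((m:ℝ)+n+ℓ)/2) * u^(m+n) * v^ℓ)) * |q|^(n-k) := by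
      intro k hk
      have hkn : k ≤ n := Nat.lt_succ_iff.mp (Finset.mem_range.mp hk)
      have hkm : k < m := lt_of_le_of_lt hkn hnm
      have hw0 : (0:ℝ) ≤ u^2/(1-q) := div_nonneg (by positivity) hD.le
      have hAb : |Acoef q n k| ≤ Cq q := by
        rw [Acoef, Finset.abs_prod]
        have hinj : Set.InjOn (fun i => n - i - 1) (Finset.range k) := by
          intro i hi j hj hij
          simp only [Finset.coe_range, Set.mem_Iio] at hi hj
          dsimp only at hij
          omega
        calc ∏ i ∈ Finset.range k, |1 - q^(n-i)|
            ≤ ∏ i ∈ Finset.range k, (1 - |q|^(n-i))⁻¹ := by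
              refine Finset.prod_le_prod (fun i _ => abs_nonneg _) (fun i hi => ?_)
              have hin : i < k := Finset.mem_range.mp hi
              exact abs_one_sub_pow_le ht1 (n-i) (by omega)
          _ = ∏ j ∈ (Finset.range k).image (fun i => n - i - 1), (1 - |q|^(j+1))⁻¹ := by
              rw [Finset.prod_image (fun i hi j hj hij => hinj hi hj hij)]
              refine Finset.prod_congr rfl fun i hi => ?_
              have hin : i < k := Finset.mem_range.mp hi
              show (1 - |q|^(n-i))⁻¹ = (1 - |q|^((n-i-1)+1))⁻¹
              have he : n - i - 1 + 1 = n - i := by omega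
              rw [he]
          _ ≤ Cq q := hprodle _
      have hRb : |Rr q m n k| ≤ Cq q * |q|^(n-k) := by
        calc |Rr q m n k| ≤ Rr |q| m n k := abs_Rr_le q m n k
          _ ≤ |q| ^ ((m-k)*(n-k)) * Bb |q| m k := Rr_le_pow_mul_Bb |q| ht0 ht1 m n k
          _ ≤ |q|^(n-k) * (∏ i ∈ Finset.range k, (1 - |q|^(i+1))⁻¹) := by
              refine mul_le_mul ?_ (Bb_le |q| ht0 ht1 m k) (Bb_nonneg |q| ht0 m k)
                (pow_nonneg ht0 _)
              exact pow_le_pow_of_le_one ht0 ht1.le (Nat.le_mul_of_pos_left _ (by omega))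
          _ ≤ |q|^(n-k) * Cq q :=
              mul_le_mul_of_nonneg_left (hprodle _) (pow_nonneg ht0 _)
          _ = Cq q * |q|^(n-k) := mul_comm _ _
      have hwb : |wcoef q u m n k| ≤ (u^2/(1-q))^k * (Cq q * (Cq q * |q|^(n-k))) := by
        rw [wcoef, abs_mul, abs_mul, abs_pow, abs_of_nonneg hw0]
        calc (u^2/(1-q))^k * |Acoef q n k| * |Rr q m n k|
            ≤ (u^2/(1-q))^k * Cq q * (Cq q * |q|^(n-k)) := by
              refine mul_le_mul ?_ hRb (abs_nonneg _)
                (mul_nonneg (pow_nonneg hw0 k) hC0)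
              exact mul_le_mul_of_nonneg_left hAb (pow_nonneg hw0 k)
          _ = (u^2/(1-q))^k * (Cq q * (Cq q * |q|^(n-k))) := by ring
      have hW0 : (0:ℝ) ≤ (u^2/(1-q))^k * (Cq q * (Cq q * |q|^(n-k))) :=
        mul_nonneg (pow_nonneg hw0 k)
          (mul_nonneg hC0 (mul_nonneg hC0 (pow_nonneg ht0 _)))
      have hsa : ‖(star a)^(m-k)‖ ≤ Cq q * (1-q) ^ (-((m-k:ℕ):ℝ)/2) * u^(m-k) := by
        rw [← star_pow, norm_star]
        exact hna (m-k)
      have hcc : ‖c^ℓ‖ ≤ Cq q * (1-q) ^ (-(ℓ:ℝ)/2) * v^ℓ := hc ℓ hℓ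
      have haa : ‖a^(n-k)‖ ≤ Cq q * (1-q) ^ (-((n-k:ℕ):ℝ)/2) * u^(n-k) := hna (n-k)
      have hR1 : (0:ℝ) ≤ Cq q * (1-q) ^ (-((n-k:ℕ):ℝ)/2) * u^(n-k) :=
        mul_nonneg (mul_nonneg hC0 (Real.rpow_nonneg hD.le _)) (pow_nonneg hu.le _)
      have hR2 : (0:ℝ) ≤ Cq q * (1-q) ^ (-(ℓ:ℝ)/2) * v^ℓ :=
        mul_nonneg (mul_nonneg hC0 (Real.rpow_nonneg hD.le _)) (pow_nonneg hv.le _)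
      have hR3 : (0:ℝ) ≤ Cq q * (1-q) ^ (-((m-k:ℕ):ℝ)/2) * u^(m-k) :=
        mul_nonneg (mul_nonneg hC0 (Real.rpow_nonneg hD.le _)) (pow_nonneg hu.le _)
      calc ‖(wcoef q u m n k * q^((m-k-1)*ℓ)) • (a^(n-k) * (c^ℓ * (star a)^(m-k)))‖
          = |wcoef q u m n k * q^((m-k-1)*ℓ)| * ‖a^(n-k) * (c^ℓ * (star a)^(m-k))‖ := by
            rw [norm_smul, Real.norm_eq_abs]
        _ ≤ |wcoef q u m n k| * (‖a^(n-k)‖ * (‖c^ℓ‖ * ‖(star a)^(m-k)‖)) := by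
            refine mul_le_mul ?_ ?_ (norm_nonneg _) (abs_nonneg _)
            · rw [abs_mul, abs_pow]
              have h1' : |q|^((m-k-1)*ℓ) ≤ 1 := pow_le_one₀ ht0 ht1.le
              nlinarith [abs_nonneg (wcoef q u m n k)]
            · exact (norm_mul_le _ _).trans
                (mul_le_mul_of_nonneg_left (norm_mul_le _ _) (norm_nonneg _))
        _ ≤ ((u^2/(1-q))^k * (Cq q * (Cq q * |q|^(n-k)))) *
              ((Cq q * (1-q) ^ (-((n-k:ℕ):ℝ)/2) * u^(n-k)) *
               ((Cq q * (1-q) ^ (-(ℓ:ℝ)/2) * v^ℓ) *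
                (Cq q * (1-q) ^ (-((m-k:ℕ):ℝ)/2) * u^(m-k)))) := by
            refine mul_le_mul hwb ?_
              (mul_nonneg (norm_nonneg _) (mul_nonneg (norm_nonneg _) (norm_nonneg _)))
              hW0
            refine mul_le_mul haa ?_
              (mul_nonneg (norm_nonneg _) (norm_nonneg _)) hR1
            exact mul_le_mul hcc hsa (norm_nonneg _) hR2
        _ = (Cq q^5 * ((1 - q) ^ (-((m:ℝ)+n+ℓ)/2) * u^(m+n) * v^ℓ)) * |q|^(n-k) := by
            have e1 : (u^2/(1-q))^k = u^(2*k) * (1-q) ^ (-(k:ℝ)) := by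
              rw [div_pow, ← pow_mul, Real.rpow_neg hD.le, Real.rpow_natCast,
                div_eq_mul_inv]
            have e2 : (1-q) ^ (-(k:ℝ)) * ((1-q) ^ (-((n-k:ℕ):ℝ)/2) *
                ((1-q) ^ (-(ℓ:ℝ)/2) * (1-q) ^ (-((m-k:ℕ):ℝ)/2)))
                = (1-q) ^ (-((m:ℝ)+n+ℓ)/2) := by
              rw [← Real.rpow_add hD, ← Real.rpow_add hD, ← Real.rpow_add hD]
              congr 1
              rw [Nat.cast_sub hkn, Nat.cast_sub hkm.le]
              push_cast
              ring
            have e3 : u^(2*k) * (u^(n-k) * u^(m-k)) = u^(m+n) := by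
              rw [← pow_add, ← pow_add]
              congr 1
              omega
            calc ((u^2/(1-q))^k * (Cq q * (Cq q * |q|^(n-k)))) *
                  ((Cq q * (1-q) ^ (-((n-k:ℕ):ℝ)/2) * u^(n-k)) *
                   ((Cq q * (1-q) ^ (-(ℓ:ℝ)/2) * v^ℓ) *
                    (Cq q * (1-q) ^ (-((m-k:ℕ):ℝ)/2) * u^(m-k))))
                = Cq q^5 * ((u^(2*k) * (u^(n-k) * u^(m-k))) *
                    (((1-q) ^ (-(k:ℝ)) * ((1-q) ^ (-((n-k:ℕ):ℝ)/2) *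
                      ((1-q) ^ (-(ℓ:ℝ)/2) * (1-q) ^ (-((m-k:ℕ):ℝ)/2)))) *
                     (v^ℓ * |q|^(n-k)))) := by
                  rw [e1]; ring
              _ = (Cq q^5 * ((1 - q) ^ (-((m:ℝ)+n+ℓ)/2) * u^(m+n) * v^ℓ)) * |q|^(n-k) := by
                  rw [e3, e2]; ring
    calc ‖∑ k ∈ Finset.range (n+1),
          (wcoef q u m n k * q^((m-k-1)*ℓ)) • (a^(n-k) * (c^ℓ * (star a)^(m-k)))‖
        ≤ ∑ k ∈ Finset.range (n+1),
            ‖(wcoef q u m n k * q^((m-k-1)*ℓ)) • (a^(n-k) * (c^ℓ * (star a)^(m-k)))‖ :=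
          norm_sum_le _ _
      _ ≤ ∑ k ∈ Finset.range (n+1),
            (Cq q^5 * ((1 - q) ^ (-((m:ℝ)+n+ℓ)/2) * u^(m+n) * v^ℓ)) * |q|^(n-k) :=
          Finset.sum_le_sum hterm
      _ = (Cq q^5 * ((1 - q) ^ (-((m:ℝ)+n+ℓ)/2) * u^(m+n) * v^ℓ)) *
            ∑ k ∈ Finset.range (n+1), |q|^(n-k) := by rw [← Finset.mul_sum]
      _ ≤ (Cq q^5 * ((1 - q) ^ (-((m:ℝ)+n+ℓ)/2) * u^(m+n) * v^ℓ)) * (1-|q|)⁻¹ :=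
          mul_le_mul_of_nonneg_left hgeo2 hK0
      _ ≤ (Cq q ^ 3 + Cq q ^ 7 / (1 - |q|))
            * (1 - q) ^ (-((m : ℝ) + n + ℓ) / 2) * u ^ (m + n) * v ^ ℓ := by
          have h57 : Cq q^5 * (1-|q|)⁻¹ ≤ Cq q^3 + Cq q^7 / (1-|q|) := by
            have h1' : Cq q^5 ≤ Cq q^7 := pow_le_pow_right₀ hC1 (by omega)
            have h2' : Cq q^5 * (1-|q|)⁻¹ ≤ Cq q^7 * (1-|q|)⁻¹ :=
              mul_le_mul_of_nonneg_right h1' (inv_nonneg.2 hD1.le)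
            have h3' : (0:ℝ) ≤ Cq q^3 := pow_nonneg hC0 3
            rw [div_eq_mul_inv]
            linarith
          calc Cq q^5 * ((1 - q) ^ (-((m:ℝ)+n+ℓ)/2) * u^(m+n) * v^ℓ) * (1-|q|)⁻¹
              = (Cq q^5 * (1-|q|)⁻¹) * ((1 - q) ^ (-((m:ℝ)+n+ℓ)/2) * u^(m+n) * v^ℓ) := by
                ring
            _ ≤ (Cq q ^ 3 + Cq q ^ 7 / (1 - |q|)) *
                  ((1 - q) ^ (-((m:ℝ)+n+ℓ)/2) * u^(m+n) * v^ℓ) :=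
                mul_le_mul_of_nonneg_right h57 hREST
            _ = (Cq q ^ 3 + Cq q ^ 7 / (1 - |q|))
                  * (1 - q) ^ (-((m : ℝ) + n + ℓ) / 2) * u ^ (m + n) * v ^ ℓ := by
                ring
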